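/- arXiv:1210.5157 — 2 statements merged into one kernel-verified Lean document; each statement's English description precedes it below -/
import Mathlib

section
/- For every integer s ≥ 1, ζ(2s) = -π · [(d^(2s-1)/dz^(2s-1)) cot(πz)]|_{z=1/4} / (2^(2s) · (2^(2s)-1) · Γ(2s)). -/
open Real

namespace ZetaCotAux
open Filter Set

noncomputable def S (k : ℕ) (x : ℝ) : ℝ :=
  (x ^ (k+1))⁻¹ + ∑' n : ℕ, (((x - ((n : ℝ)+1)) ^ (k+1))⁻¹ + ((x + ((n : ℝ)+1)) ^ (k+1))⁻¹)

lemma summable_inv_sq : Summable (fun n : ℕ => (((n : ℝ)+1)^2)⁻¹) := by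
  have := Real.summable_one_div_nat_pow.mpr (le_refl 2)
  have h := (summable_nat_add_iff 1).mpr this
  simpa [one_div] using h

lemma pair_bound {x m : ℝ} (hx0 : 0 < x) (hx1 : x < 1) (hm1 : 1 ≤ m) :
    ‖((x - m) ^ 1)⁻¹ + ((x + m) ^ 1)⁻¹‖ ≤ (2 / (1 - x^2)) * (m^2)⁻¹ := by
  have h1x : (0:ℝ) < 1 - x^2 := by nlinarith
  have hne1 : x - m ≠ 0 := by nlinarith
  have hne2 : x + m ≠ 0 := by nlinarith
  have hm2 : (1:ℝ) ≤ m^2 := by nlinarith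
  have hms : m^2 * (1 - x^2) ≤ m^2 - x^2 := by
    nlinarith [mul_nonneg (sq_nonneg x) (by nlinarith : (0:ℝ) ≤ m^2 - 1)]
  have hpos : (0:ℝ) < m^2 - x^2 := lt_of_lt_of_le (by positivity) hms
  have hpair : ((x - m) ^ 1)⁻¹ + ((x + m) ^ 1)⁻¹ = -(2*x / (m^2 - x^2)) := by
    field_simp
    ring
  rw [hpair, norm_neg, Real.norm_eq_abs, abs_of_pos (by positivity), div_le_iff₀ hpos,
    mul_assoc]
  rw [show (2:ℝ) / (1 - x^2) * ((m ^ 2)⁻¹ * (m^2 - x^2)) = 2 * ((m^2 - x^2) / (m^2 * (1-x^2)))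
    by field_simp]
  have h3 : x ≤ (m^2-x^2)/(m^2*(1-x^2)) := by
    rw [le_div_iff₀ (by positivity)]
    nlinarith
  linarith

lemma norm_term_le {b : ℝ} (hb1 : b < 1) {j : ℕ} (hj : 2 ≤ j) (n : ℕ) {y : ℝ}
    (hy : y ∈ Set.Ioo (0:ℝ) b) :
    ‖((y - ((n : ℝ)+1)) ^ j)⁻¹ + ((y + ((n : ℝ)+1)) ^ j)⁻¹‖ ≤
      (((1-b)⁻¹)^j + 1) * (((n : ℝ)+1)^2)⁻¹ := by
  obtain ⟨hy0, hyb⟩ := hy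
  set m : ℝ := (n : ℝ) + 1 with hm
  have hm1 : (1:ℝ) ≤ m := by simp [hm]
  have hm0 : (0:ℝ) < m := by linarith
  have h1b : (0:ℝ) < 1 - b := by linarith
  have key1 : m * (1-b) ≤ m - y := by nlinarith
  have hmy0 : (0:ℝ) < m - y := lt_of_lt_of_le (by positivity) key1
  have hmsq : m^2 ≤ m^j := pow_le_pow_right₀ hm1 hj
  have piece1 : (|y - m|^j)⁻¹ ≤ ((1-b)⁻¹)^j * (m^2)⁻¹ := by
    have habs : |y - m| = m - y := by rw [abs_sub_comm, abs_of_pos hmy0]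
    rw [habs]
    calc ((m-y)^j)⁻¹ ≤ ((m*(1-b))^j)⁻¹ := by gcongr
      _ = ((1-b)⁻¹)^j * (m^j)⁻¹ := by rw [mul_pow, mul_inv, inv_pow]; ring
      _ ≤ ((1-b)⁻¹)^j * (m^2)⁻¹ := by gcongr
  have piece2 : (|y + m|^j)⁻¹ ≤ (m^2)⁻¹ := by
    rw [abs_of_pos (by linarith : (0:ℝ) < y + m)]
    calc ((y+m)^j)⁻¹ ≤ (m^j)⁻¹ := by gcongr; linarith
      _ ≤ (m^2)⁻¹ := by gcongr
  calc ‖((y - m) ^ j)⁻¹ + ((y + m) ^ j)⁻¹‖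
      ≤ ‖((y - m) ^ j)⁻¹‖ + ‖((y + m) ^ j)⁻¹‖ := norm_add_le _ _
    _ = (|y - m|^j)⁻¹ + (|y + m|^j)⁻¹ := by
        rw [norm_inv, norm_inv, norm_pow, norm_pow, Real.norm_eq_abs, Real.norm_eq_abs]
    _ ≤ ((1-b)⁻¹)^j * (m^2)⁻¹ + (m^2)⁻¹ := add_le_add piece1 piece2
    _ = (((1-b)⁻¹)^j + 1) * (m^2)⁻¹ := by ring

lemma hasDerivAt_inv_pow {m : ℝ} (k : ℕ) {y : ℝ} (h : y - m ≠ 0) :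
    HasDerivAt (fun z : ℝ => ((z - m) ^ (k+1))⁻¹)
      (-((k:ℝ)+1) * ((y - m) ^ (k+2))⁻¹) y := by
  have h1 : HasDerivAt (fun z : ℝ => (z - m) ^ (k+1))
      (((k:ℝ)+1) * (y - m) ^ k) y := by
    have := ((hasDerivAt_id y).sub_const m).pow (k+1)
    exact this.congr_deriv (by simp)
  have h2 := h1.inv (pow_ne_zero _ h)
  refine h2.congr_deriv ?_
  rw [show ((y - m) ^ (k+1))^2 = (y-m)^(k+2) * (y-m)^k by ring]
  field_simp

lemma hasDerivAt_term {m : ℝ} (k : ℕ) {y : ℝ} (h1 : y - m ≠ 0) (h2 : y + m ≠ 0) :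
    HasDerivAt (fun z : ℝ => ((z - m) ^ (k+1))⁻¹ + ((z + m) ^ (k+1))⁻¹)
      (-((k:ℝ)+1) * (((y - m) ^ (k+2))⁻¹ + ((y + m) ^ (k+2))⁻¹)) y := by
  have hA := hasDerivAt_inv_pow k h1
  have hB := hasDerivAt_inv_pow (m := -m) k (by simpa [sub_neg_eq_add] using h2)
  simp only [sub_neg_eq_add] at hB
  have := hA.add hB
  refine this.congr_deriv ?_
  ring

lemma summable_term {x : ℝ} (hx : x ∈ Set.Ioo (0:ℝ) 1) (k : ℕ) :
    Summable (fun n : ℕ => ((x - ((n : ℝ)+1)) ^ (k+1))⁻¹ + ((x + ((n : ℝ)+1)) ^ (k+1))⁻¹) := by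
  obtain ⟨hx0, hx1⟩ := hx
  rcases Nat.eq_zero_or_pos k with rfl | hk
  · exact Summable.of_norm_bounded (summable_inv_sq.mul_left _)
      (fun n => pair_bound hx0 hx1 (by push_cast; linarith [Nat.cast_nonneg (α := ℝ) n]))
  · exact Summable.of_norm_bounded (summable_inv_sq.mul_left _)
      (fun n => norm_term_le (b := (x+1)/2) (by linarith) (by omega) n ⟨hx0, by linarith⟩)

lemma hasDerivAt_S {x : ℝ} (hx : x ∈ Set.Ioo (0:ℝ) 1) (k : ℕ) :
    HasDerivAt (S k) (-((k:ℝ)+1) * S (k+1) x) x := by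
  obtain ⟨hx0, hx1⟩ := hx
  set b : ℝ := (x+1)/2 with hb
  have hxb : x < b := by rw [hb]; linarith
  have hb0 : 0 < b := by rw [hb]; linarith
  have hb1 : b < 1 := by rw [hb]; linarith
  have hmem : x ∈ Set.Ioo (0:ℝ) b := ⟨hx0, hxb⟩
  have hne : ∀ (n : ℕ) (y : ℝ), y ∈ Set.Ioo (0:ℝ) b →
      y - ((n:ℝ)+1) ≠ 0 ∧ y + ((n:ℝ)+1) ≠ 0 := by
    intro n y ⟨h0, hyb⟩
    have : (0:ℝ) ≤ (n:ℝ) := Nat.cast_nonneg n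
    constructor <;> nlinarith
  -- derivative of the tsum part
  have htsum : HasDerivAt
      (fun z => ∑' n : ℕ, (((z - ((n : ℝ)+1)) ^ (k+1))⁻¹ + ((z + ((n : ℝ)+1)) ^ (k+1))⁻¹))
      (∑' n : ℕ, -((k:ℝ)+1) * (((x - ((n : ℝ)+1)) ^ (k+2))⁻¹ + ((x + ((n : ℝ)+1)) ^ (k+2))⁻¹))
      x := by
    apply hasDerivAt_tsum_of_isPreconnected
      (u := fun n : ℕ => (((k:ℝ)+1) * (((1-b)⁻¹)^(k+2) + 1)) * (((n : ℝ)+1)^2)⁻¹)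
      (summable_inv_sq.mul_left _) isOpen_Ioo isPreconnected_Ioo
      (fun n y hy => hasDerivAt_term k (hne n y hy).1 (hne n y hy).2)
      (fun n y hy => ?_) hmem
      (summable_term ⟨hx0, hx1⟩ k) hmem
    have h1 : ‖-((k:ℝ)+1)‖ = (k:ℝ)+1 := by
      rw [norm_neg, Real.norm_eq_abs, abs_of_pos (by positivity)]
    show _ ≤ ((k:ℝ)+1) * (((1-b)⁻¹)^(k+2) + 1) * (((n : ℝ)+1)^2)⁻¹
    rw [norm_mul, h1, mul_assoc]
    gcongr
    exact norm_term_le hb1 (by omega) n hy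
  have hlead : HasDerivAt (fun z : ℝ => (z ^ (k+1))⁻¹) (-((k:ℝ)+1) * (x^(k+2))⁻¹) x := by
    have := hasDerivAt_inv_pow (m := 0) k (by simpa using hx0.ne')
    simpa using this
  have hall := hlead.add htsum
  rw [tsum_mul_left] at hall
  unfold S
  refine hall.congr_deriv ?_
  ring

section ClaimA
variable {x : ℝ}

-- step 4+5 : HasSum of the log series, for any x ∈ Ioo 0 1
lemma log_series_eq (hx : x ∈ Set.Ioo (0:ℝ) 1) :
    Summable (fun n : ℕ => Real.log (1 - x^2/((n:ℝ)+1)^2)) ∧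
    ∑' n : ℕ, Real.log (1 - x^2/((n:ℝ)+1)^2) = Real.log (Real.sin (π*x)) - Real.log (π*x) := by
  obtain ⟨hx0, hx1⟩ := hx
  have hπx : 0 < π * x := by positivity
  have hsin : 0 < Real.sin (π*x) :=
    Real.sin_pos_of_pos_of_lt_pi hπx (by nlinarith [Real.pi_pos])
  have hfac : ∀ n : ℕ, 0 < 1 - x^2/((n:ℝ)+1)^2 := by
    intro n
    have hn : (1:ℝ) ≤ (n:ℝ)+1 := by linarith [Nat.cast_nonneg (α:=ℝ) n]
    have : x^2/((n:ℝ)+1)^2 < 1 := by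
      rw [div_lt_one (by positivity)]
      nlinarith
    linarith
  -- tendsto of partial log sums
  have hprod := Real.tendsto_euler_sin_prod x
  have hlog := (Real.continuousAt_log hsin.ne').tendsto.comp hprod
  have hrw : ∀ N : ℕ, Real.log (π * x * ∏ j ∈ Finset.range N, ((1:ℝ) - x ^ 2 / ((j:ℝ) + 1) ^ 2))
      = Real.log (π*x) + ∑ j ∈ Finset.range N, Real.log (1 - x^2/((j:ℝ)+1)^2) := by
    intro N
    rw [Real.log_mul hπx.ne' (Finset.prod_ne_zero_iff.mpr fun j _ => (hfac j).ne'),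
      Real.log_prod (fun j _ => (hfac j).ne')]
  simp only [Function.comp_def, hrw] at hlog
  have htend : Tendsto (fun N => ∑ j ∈ Finset.range N, Real.log (1 - x^2/((j:ℝ)+1)^2))
      atTop (nhds (Real.log (Real.sin (π*x)) - Real.log (π*x))) := by
    have := hlog.sub_const (Real.log (π*x))
    simpa using this
  -- summability
  have hnonpos : ∀ n : ℕ, Real.log (1 - x^2/((n:ℝ)+1)^2) ≤ 0 := by
    intro n
    have ht : (0:ℝ) ≤ x^2/((n:ℝ)+1)^2 := by positivity
    exact Real.log_nonpos (by linarith [hfac n]) (by linarith)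
  have hmono : Monotone (fun N => ∑ j ∈ Finset.range N, -Real.log (1 - x^2/((j:ℝ)+1)^2)) := by
    apply monotone_nat_of_le_succ
    intro N
    rw [Finset.sum_range_succ]
    nlinarith [hnonpos N]
  have htendneg := htend.neg
  simp only [← Finset.sum_neg_distrib] at htendneg
  have hbdd : ∀ N, ∑ j ∈ Finset.range N, -Real.log (1 - x^2/((j:ℝ)+1)^2)
      ≤ -(Real.log (Real.sin (π*x)) - Real.log (π*x)) :=
    fun N => hmono.ge_of_tendsto htendneg N
  have hsumneg : Summable (fun n : ℕ => -Real.log (1 - x^2/((n:ℝ)+1)^2)) :=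
    summable_of_sum_range_le (fun n => by linarith [hnonpos n]) hbdd
  have hsum : Summable (fun n : ℕ => Real.log (1 - x^2/((n:ℝ)+1)^2)) := by
    simpa using hsumneg.neg
  refine ⟨hsum, tendsto_nhds_unique hsum.hasSum.tendsto_sum_nat htend⟩

end ClaimA

section ClaimA2
variable {x : ℝ}

lemma cot_expansion (hx : x ∈ Set.Ioo (0:ℝ) 1) : π * Real.cot (π*x) = S 0 x := by
  obtain ⟨hx0, hx1⟩ := hx
  have hπ := Real.pi_pos
  have hπx : 0 < π * x := by positivity
  have hsin : 0 < Real.sin (π*x) :=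
    Real.sin_pos_of_pos_of_lt_pi hπx (by nlinarith)
  set b : ℝ := (x+1)/2 with hb
  have hxb : x < b := by rw [hb]; linarith
  have hb0 : 0 < b := by rw [hb]; linarith
  have hb1 : b < 1 := by rw [hb]; linarith
  have hb2 : 0 < 1 - b^2 := by nlinarith
  -- derivative of each log term
  have hterm : ∀ (n : ℕ) (y : ℝ), y ∈ Set.Ioo (0:ℝ) b →
      HasDerivAt (fun z : ℝ => Real.log (1 - z^2/((n:ℝ)+1)^2))
        (-(2*y) * ((((n:ℝ)+1)^2 - y^2)⁻¹)) y := by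
    intro n y ⟨hy0, hyb⟩
    have hn : (1:ℝ) ≤ (n:ℝ)+1 := by linarith [Nat.cast_nonneg (α:=ℝ) n]
    have hyn : y < (n:ℝ)+1 := by linarith
    have hfacpos : 0 < 1 - y^2/((n:ℝ)+1)^2 := by
      rw [sub_pos, div_lt_one (by positivity)]
      nlinarith
    have hinner : HasDerivAt (fun z : ℝ => 1 - z^2/((n:ℝ)+1)^2)
        (-(2*y)/((n:ℝ)+1)^2) y := by
      have h1 : HasDerivAt (fun z : ℝ => z^2) (2*y) y := by
        exact (hasDerivAt_pow 2 y).congr_deriv (by norm_num)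
      have h2 := ((h1.div_const (((n:ℝ)+1)^2)).const_sub 1)
      refine h2.congr_deriv ?_
      ring
    have := hinner.log hfacpos.ne'
    convert this using 1
    have hmn : ((n:ℝ)+1)^2 - y^2 > 0 := by nlinarith
    field_simp
  -- bound
  have hbound : ∀ (n : ℕ) (y : ℝ), y ∈ Set.Ioo (0:ℝ) b →
      ‖-(2*y) * ((((n:ℝ)+1)^2 - y^2)⁻¹)‖ ≤ (2/(1-b^2)) * (((n:ℝ)+1)^2)⁻¹ := by
    intro n y ⟨hy0, hyb⟩
    have hn : (1:ℝ) ≤ (n:ℝ)+1 := by linarith [Nat.cast_nonneg (α:=ℝ) n]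
    have hkey : ((n:ℝ)+1)^2 * (1 - b^2) ≤ ((n:ℝ)+1)^2 - y^2 := by
      nlinarith [mul_nonneg (by nlinarith : (0:ℝ) ≤ ((n:ℝ)+1)^2 - 1) (sq_nonneg b),
        mul_pos (by linarith : (0:ℝ) < b - y) (by linarith : (0:ℝ) < b + y)]
    have hmn : (0:ℝ) < ((n:ℝ)+1)^2 - y^2 := lt_of_lt_of_le (by positivity) hkey
    rw [norm_mul, norm_neg, norm_inv, Real.norm_eq_abs, Real.norm_eq_abs,
      abs_of_pos (by positivity : (0:ℝ) < 2*y), abs_of_pos hmn]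
    rw [show (2:ℝ)/(1-b^2) * (((n:ℝ)+1)^2)⁻¹ = 2 * ((((n:ℝ)+1)^2 * (1-b^2))⁻¹) by
      rw [mul_inv]; ring]
    have h2 : (((n:ℝ)+1)^2 - y^2)⁻¹ ≤ (((n:ℝ)+1)^2 * (1-b^2))⁻¹ := by
      gcongr
    calc 2*y * (((n:ℝ)+1)^2 - y^2)⁻¹ ≤ 2*1 * ((((n:ℝ)+1)^2 * (1-b^2))⁻¹) := by
          apply mul_le_mul (by linarith) h2 (by positivity) (by norm_num)
      _ = 2 * ((((n:ℝ)+1)^2 * (1-b^2))⁻¹) := by ring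
  -- derivative of the tsum
  have htsum : HasDerivAt (fun z : ℝ => ∑' n : ℕ, Real.log (1 - z^2/((n:ℝ)+1)^2))
      (∑' n : ℕ, -(2*x) * ((((n:ℝ)+1)^2 - x^2)⁻¹)) x :=
    hasDerivAt_tsum_of_isPreconnected (summable_inv_sq.mul_left _) isOpen_Ioo
      isPreconnected_Ioo hterm hbound ⟨hx0, hxb⟩ (log_series_eq ⟨hx0, hx1⟩).1 ⟨hx0, hxb⟩
  -- the tsum equals log sin - log πx on Ioo 0 1, hence near x
  have heq : (fun y : ℝ => ∑' n : ℕ, Real.log (1 - y^2/((n:ℝ)+1)^2))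
      =ᶠ[nhds x] (fun y => Real.log (Real.sin (π*y)) - Real.log (π*y)) := by
    filter_upwards [Ioo_mem_nhds hx0 hx1] with y hy
    exact (log_series_eq hy).2
  have htsum2 : HasDerivAt (fun y : ℝ => Real.log (Real.sin (π*y)) - Real.log (π*y))
      (∑' n : ℕ, -(2*x) * ((((n:ℝ)+1)^2 - x^2)⁻¹)) x :=
    (heq.hasDerivAt_iff).mp htsum
  -- direct derivative of log sin - log πx
  have hdirect : HasDerivAt (fun y : ℝ => Real.log (Real.sin (π*y)) - Real.log (π*y))
      (π * (Real.cos (π*x) / Real.sin (π*x)) - x⁻¹) x := by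
    have hlin : HasDerivAt (fun y : ℝ => π * y) π x := by
      simpa using (hasDerivAt_id x).const_mul π
    have h1 : HasDerivAt (fun y : ℝ => Real.log (Real.sin (π*y)))
        (π * (Real.cos (π*x) / Real.sin (π*x))) x := by
      have := (hlin.sin).log hsin.ne'
      convert this using 1
      ring
    have h2 : HasDerivAt (fun y : ℝ => Real.log (π*y)) x⁻¹ x := by
      have := hlin.log hπx.ne'
      convert this using 1
      field_simp
    exact h1.sub h2
  have hkey := htsum2.unique hdirect
  -- conclude
  have hterm_eq : ∀ n : ℕ, ((x - ((n:ℝ)+1)) ^ (0+1))⁻¹ + ((x + ((n:ℝ)+1)) ^ (0+1))⁻¹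
      = -(2*x) * ((((n:ℝ)+1)^2 - x^2)⁻¹) := by
    intro n
    have hn : (1:ℝ) ≤ (n:ℝ)+1 := by linarith [Nat.cast_nonneg (α:=ℝ) n]
    have h1 : x - ((n:ℝ)+1) ≠ 0 := by nlinarith
    have h2 : x + ((n:ℝ)+1) ≠ 0 := by nlinarith
    have h3 : ((n:ℝ)+1)^2 - x^2 ≠ 0 := by nlinarith
    field_simp
    ring
  rw [Real.cot_eq_cos_div_sin]
  unfold S
  rw [tsum_congr hterm_eq, pow_one]
  linarith [hkey]

end ClaimA2

lemma iteratedDeriv_cot (k : ℕ) : ∀ x ∈ Set.Ioo (0:ℝ) 1,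
    iteratedDeriv k (fun z : ℝ => Real.cot (π * z)) x
      = (-1)^k * (k.factorial : ℝ) / π * S k x := by
  induction k with
  | zero =>
    intro x hx
    have hπ := Real.pi_ne_zero
    have h := cot_expansion hx
    simp only [iteratedDeriv_zero, pow_zero, Nat.factorial_zero, Nat.cast_one]
    field_simp
    linarith [h]
  | succ k ih =>
    intro x hx
    have hE : iteratedDeriv k (fun z : ℝ => Real.cot (π * z))
        =ᶠ[nhds x] fun y => (-1)^k * (k.factorial : ℝ) / π * S k y := by
      filter_upwards [Ioo_mem_nhds hx.1 hx.2] with y hy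
      exact ih y hy
    rw [iteratedDeriv_succ, hE.deriv_eq,
      (((hasDerivAt_S hx k).const_mul ((-1)^k * (k.factorial : ℝ) / π))).deriv]
    push_cast [Nat.factorial_succ, pow_succ]
    ring

-- summability of inverse powers ≥ 2 of (a*n+b) with b ≥ 1
lemma summable_aux {j : ℕ} (hj : 2 ≤ j) {a b : ℝ} (ha : 1 ≤ a) (hb : 1 ≤ b) :
    Summable (fun n : ℕ => ((a*(n:ℝ)+b) ^ j)⁻¹) := by
  apply Summable.of_nonneg_of_le (fun n => by positivity) (fun n => ?_) summable_inv_sq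
  have hn0 : (0:ℝ) ≤ (n:ℝ) := Nat.cast_nonneg n
  have h1 : ((n:ℝ)+1) ≤ a*(n:ℝ)+b := by nlinarith
  calc ((a*(n:ℝ)+b) ^ j)⁻¹ ≤ (((n:ℝ)+1)^j)⁻¹ := by gcongr
    _ ≤ (((n:ℝ)+1)^2)⁻¹ :=
        inv_anti₀ (by positivity) (pow_le_pow_right₀ (by linarith) hj)

lemma S_quarter (s : ℕ) (hs : 1 ≤ s) :
    S (2*s-1) (1/4 : ℝ) = 4^(2*s) *
      (1 + (∑' n : ℕ, ((4*(n:ℝ)+3) ^ (2*s))⁻¹) + ∑' n : ℕ, ((4*(n:ℝ)+5) ^ (2*s))⁻¹) := by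
  have hk : 2*s-1+1 = 2*s := by omega
  unfold S
  rw [hk]
  have heven : Even (2*s) := even_two_mul s
  have hle : ((1:ℝ)/4)^(2*s) ≠ 0 := by positivity
  have hlead : (((1:ℝ)/4) ^ (2*s))⁻¹ = 4^(2*s) := by
    rw [div_pow, one_pow, one_div, inv_inv]
  have hterm : ∀ n : ℕ, (((1/4:ℝ) - ((n:ℝ)+1)) ^ (2*s))⁻¹ + (((1/4:ℝ) + ((n:ℝ)+1)) ^ (2*s))⁻¹
      = 4^(2*s) * (((4*(n:ℝ)+3) ^ (2*s))⁻¹ + ((4*(n:ℝ)+5) ^ (2*s))⁻¹) := by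
    intro n
    have h1 : ((1/4:ℝ) - ((n:ℝ)+1)) = -((4*(n:ℝ)+3)/4) := by ring
    have h2 : ((1/4:ℝ) + ((n:ℝ)+1)) = (4*(n:ℝ)+5)/4 := by ring
    have h3 : (0:ℝ) < 4*(n:ℝ)+3 := by positivity
    have h4 : (0:ℝ) < 4*(n:ℝ)+5 := by positivity
    rw [h1, h2, heven.neg_pow, div_pow, div_pow]
    rw [inv_div, inv_div]
    field_simp
  rw [tsum_congr hterm, tsum_mul_left, hlead]
  rw [Summable.tsum_add (summable_aux (by omega) (by norm_num) (by norm_num))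
    (summable_aux (by omega) (by norm_num) (by norm_num))]
  ring

lemma odd_sum (s : ℕ) (hs : 1 ≤ s) :
    (1 + (∑' n : ℕ, ((4*(n:ℝ)+3) ^ (2*s))⁻¹) + ∑' n : ℕ, ((4*(n:ℝ)+5) ^ (2*s))⁻¹)
      = (1 - ((2:ℝ)^(2*s))⁻¹) * ∑' n : ℕ, (((n:ℝ)) ^ (2*s))⁻¹ := by
  have hj : 2 ≤ 2*s := by omega
  have hZ : Summable (fun n : ℕ => (((n:ℝ)) ^ (2*s))⁻¹) := by
    have := Real.summable_one_div_nat_pow.mpr hj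
    simpa [one_div] using this
  -- odd sum
  have hodd : Summable (fun n : ℕ => ((2*(n:ℝ)+1) ^ (2*s))⁻¹) :=
    summable_aux hj (by norm_num) (by norm_num)
  have h43 : Summable (fun n : ℕ => ((4*(n:ℝ)+3) ^ (2*s))⁻¹) :=
    summable_aux hj (by norm_num) (by norm_num)
  have h45 : Summable (fun n : ℕ => ((4*(n:ℝ)+5) ^ (2*s))⁻¹) :=
    summable_aux hj (by norm_num) (by norm_num)
  have h41 : Summable (fun n : ℕ => ((4*(n:ℝ)+1) ^ (2*s))⁻¹) :=
    summable_aux hj (by norm_num) (by norm_num)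
  -- even part of Z
  have heZ : Summable (fun n : ℕ => (((2*n:ℕ):ℝ) ^ (2*s))⁻¹) := by
    have : (fun n : ℕ => (((2*n:ℕ):ℝ) ^ (2*s))⁻¹)
        = fun n : ℕ => ((2:ℝ)^(2*s))⁻¹ * (((n:ℝ)) ^ (2*s))⁻¹ := by
      funext n
      push_cast
      rw [mul_pow, mul_inv]
    rw [this]
    exact hZ.mul_left _
  have hoZ : Summable (fun n : ℕ => (((2*n+1:ℕ):ℝ) ^ (2*s))⁻¹) := by
    have : (fun n : ℕ => (((2*n+1:ℕ):ℝ) ^ (2*s))⁻¹)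
        = fun n : ℕ => ((2*(n:ℝ)+1) ^ (2*s))⁻¹ := by funext n; push_cast; ring_nf
    rw [this]; exact hodd
  -- split Z into even and odd
  have hsplit := tsum_even_add_odd (f := fun n : ℕ => (((n:ℝ)) ^ (2*s))⁻¹) heZ hoZ
  -- even sum = 2^{-2s} Z
  have heval : ∑' n : ℕ, (((2*n:ℕ):ℝ) ^ (2*s))⁻¹ = ((2:ℝ)^(2*s))⁻¹ * ∑' n : ℕ, (((n:ℝ)) ^ (2*s))⁻¹ := by
    rw [← tsum_mul_left]
    congr 1
    funext n
    push_cast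
    rw [mul_pow, mul_inv]
  -- odd sum O in terms of 4n+1 / 4n+3
  have hsplitO := tsum_even_add_odd
    (f := fun n : ℕ => ((2*(n:ℝ)+1) ^ (2*s))⁻¹)
    (by
      have : (fun n : ℕ => ((2*((2*n:ℕ):ℝ)+1) ^ (2*s))⁻¹)
          = fun n : ℕ => ((4*(n:ℝ)+1) ^ (2*s))⁻¹ := by funext n; push_cast; ring_nf
      rw [this]; exact h41)
    (by
      have : (fun n : ℕ => ((2*((2*n+1:ℕ):ℝ)+1) ^ (2*s))⁻¹)
          = fun n : ℕ => ((4*(n:ℝ)+3) ^ (2*s))⁻¹ := by funext n; push_cast; ring_nf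
      rw [this]; exact h43)
  have e1 : ∑' n : ℕ, (((2*n+1:ℕ):ℝ) ^ (2*s))⁻¹ = ∑' n : ℕ, ((2*(n:ℝ)+1) ^ (2*s))⁻¹ :=
    tsum_congr (fun n => by push_cast; ring_nf)
  have e2 : ∑' n : ℕ, ((2*((2*n:ℕ):ℝ)+1) ^ (2*s))⁻¹ = ∑' n : ℕ, ((4*(n:ℝ)+1) ^ (2*s))⁻¹ :=
    tsum_congr (fun n => by push_cast; ring_nf)
  have e2' : ∑' n : ℕ, ((2*((2*n+1:ℕ):ℝ)+1) ^ (2*s))⁻¹ = ∑' n : ℕ, ((4*(n:ℝ)+3) ^ (2*s))⁻¹ :=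
    tsum_congr (fun n => by push_cast; ring_nf)
  have e3 : ∑' n : ℕ, ((4*(n:ℝ)+1) ^ (2*s))⁻¹ = 1 + ∑' n : ℕ, ((4*(n:ℝ)+5) ^ (2*s))⁻¹ := by
    rw [Summable.tsum_eq_zero_add h41]
    congr 1
    · norm_num
    · exact tsum_congr (fun n => by push_cast; ring_nf)
  rw [e2, e2'] at hsplitO
  rw [heval, e1] at hsplit
  linarith [hsplit, hsplitO, e3]


end ZetaCotAux

open ZetaCotAux in

theorem zeta_even_eq_cot_deriv (s : ℕ) (hs : 1 ≤ s) :
    riemannZeta (2 * s) =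
      ((-π * iteratedDeriv (2 * s - 1) (fun z : ℝ => Real.cot (π * z)) (1/4) /
        (2 ^ (2 * s) * (2 ^ (2 * s) - 1) * Real.Gamma (2 * s)) : ℝ) : ℂ) := by
  have hπ := Real.pi_ne_zero
  have h14 : (1/4 : ℝ) ∈ Set.Ioo (0:ℝ) 1 := by norm_num
  -- LHS : zeta as a real tsum
  have hzeta : riemannZeta (2 * s) = ((∑' n : ℕ, (((n:ℝ)) ^ (2*s))⁻¹ : ℝ) : ℂ) := by
    rw [show (2 : ℂ) * s = ((2*s : ℕ) : ℂ) by push_cast; ring,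
      zeta_nat_eq_tsum_of_gt_one (by omega : 1 < 2*s)]
    rw [tsum_congr (fun n : ℕ => show 1/(n:ℂ)^(2*s) = ((((n:ℝ)^(2*s))⁻¹ : ℝ) : ℂ) by
      push_cast; rw [one_div])]
    rw [← Complex.ofReal_tsum]
  rw [hzeta]
  congr 1
  -- now a real identity
  rw [iteratedDeriv_cot (2*s-1) (1/4) h14, S_quarter s hs, odd_sum s hs]
  have hgamma : Real.Gamma (2 * s) = ((2*s-1).factorial : ℝ) := by
    rw [show (2 : ℝ) * s = ((2*s-1 : ℕ):ℝ) + 1 by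
      push_cast [Nat.cast_sub (by omega : 1 ≤ 2*s)]; ring]
    exact Real.Gamma_nat_eq_factorial _
  rw [hgamma]
  have hodd : Odd (2*s-1) := ⟨s-1, by omega⟩
  rw [hodd.neg_one_pow]
  have key2 : (4:ℝ)^(2*s) = 2^(2*s) * 2^(2*s) := by
    rw [show (4:ℝ) = 2*2 by norm_num, mul_pow]
  have h2 : ((2:ℝ)^(2*s)) ≠ 0 := by positivity
  have h21 : ((2:ℝ)^(2*s)) - 1 ≠ 0 := by
    have : (1:ℝ) < 2^(2*s) := one_lt_pow₀ (by norm_num) (by omega)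
    linarith
  have hfact : ((2*s-1).factorial : ℝ) ≠ 0 := Nat.cast_ne_zero.mpr (Nat.factorial_ne_zero _)
  field_simp
  rw [key2]
  ring
end

section
/- For every integer s ≥ 1, the (2s-1)-th derivative of z ↦ cot(πz) evaluated at z = 1/4 is strictly negative. -/
open Real Polynomial

noncomputable def cotPoly : ℕ → Polynomial ℝ
  | 0 => X
  | (n+1) => -((cotPoly n).derivative + (cotPoly n).derivative * X ^ 2)

lemma cotPoly_prop (n : ℕ) :
    (∀ k, 0 ≤ (-1:ℝ)^n * (cotPoly n).coeff k) ∧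
    ((cotPoly n).coeff (n+1) = (-1:ℝ)^n * n.factorial) ∧
    (∀ k, n+1 < k → (cotPoly n).coeff k = 0) := by
  induction n with
  | zero =>
    refine ⟨?_, ?_, ?_⟩
    · intro k; simp only [cotPoly, coeff_X, pow_zero, one_mul]
      split <;> norm_num
    · simp [cotPoly]
    · intro k hk; simp only [cotPoly, coeff_X]
      rw [if_neg]; omega
  | succ n ih =>
    obtain ⟨h1, h2, h3⟩ := ih
    have hD : ∀ j, 0 ≤ (-1:ℝ)^n * (cotPoly n).derivative.coeff j := by
      intro j
      rw [coeff_derivative]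
      have := h1 (j+1)
      have hj : (0:ℝ) ≤ (j:ℝ) + 1 := by positivity
      nlinarith
    have hcoeff : ∀ k, (cotPoly (n+1)).coeff k =
        -((cotPoly n).derivative.coeff k +
          (if 2 ≤ k then (cotPoly n).derivative.coeff (k-2) else 0)) := by
      intro k
      simp only [cotPoly, coeff_neg, coeff_add, coeff_mul_X_pow']
    refine ⟨?_, ?_, ?_⟩
    · intro k
      rw [hcoeff k]
      have e : (-1:ℝ)^(n+1) * (-((cotPoly n).derivative.coeff k +
          (if 2 ≤ k then (cotPoly n).derivative.coeff (k-2) else 0))) =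
          (-1:ℝ)^n * (cotPoly n).derivative.coeff k +
          (-1:ℝ)^n * (if 2 ≤ k then (cotPoly n).derivative.coeff (k-2) else 0) := by
        ring
      rw [e]
      have : 0 ≤ (-1:ℝ)^n * (if 2 ≤ k then (cotPoly n).derivative.coeff (k-2) else 0) := by
        split
        · exact hD _
        · simp
      linarith [hD k]
    · rw [hcoeff (n+2), if_pos (by omega : 2 ≤ n+2)]
      have e1 : (cotPoly n).derivative.coeff (n+2) = 0 := by
        rw [coeff_derivative, h3 (n+3) (by omega)]; ring
      have e2 : n + 2 - 2 = n := by omega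
      rw [e1, e2, coeff_derivative, h2]
      rw [Nat.factorial_succ]
      push_cast
      ring
    · intro k hk
      rw [hcoeff k, if_pos (by omega : 2 ≤ k)]
      have e1 : (cotPoly n).derivative.coeff k = 0 := by
        rw [coeff_derivative, h3 (k+1) (by omega)]; ring
      have e2 : (cotPoly n).derivative.coeff (k-2) = 0 := by
        rw [coeff_derivative, h3 (k-2+1) (by omega)]; ring
      rw [e1, e2]; ring

lemma cotPoly_eval_pos (n : ℕ) : 0 < (-1:ℝ)^n * (cotPoly n).eval 1 := by
  obtain ⟨h1, h2, h3⟩ := cotPoly_prop n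
  have hne : (cotPoly n).coeff (n+1) ≠ 0 := by
    rw [h2]
    have : (0:ℝ) < n.factorial := by exact_mod_cast n.factorial_pos
    rcases Nat.even_or_odd n with he | ho
    · rw [he.neg_one_pow]; positivity
    · rw [ho.neg_one_pow]; nlinarith
  have hdeg : n + 1 ≤ (cotPoly n).natDegree := le_natDegree_of_ne_zero hne
  have hev : (cotPoly n).eval 1 =
      ∑ i ∈ Finset.range ((cotPoly n).natDegree + 1), (cotPoly n).coeff i := by
    rw [eval_eq_sum_range]
    simp
  have key : (-1:ℝ)^n * (cotPoly n).eval 1 =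
      ∑ i ∈ Finset.range ((cotPoly n).natDegree + 1), (-1:ℝ)^n * (cotPoly n).coeff i := by
    rw [hev, Finset.mul_sum]
  rw [key]
  have hmem : n + 1 ∈ Finset.range ((cotPoly n).natDegree + 1) := by
    simp; omega
  have hle : (-1:ℝ)^n * (cotPoly n).coeff (n+1) ≤
      ∑ i ∈ Finset.range ((cotPoly n).natDegree + 1), (-1:ℝ)^n * (cotPoly n).coeff i :=
    Finset.single_le_sum (f := fun i => (-1:ℝ)^n * (cotPoly n).coeff i)
      (fun i _ => h1 i) hmem
  have hsq : (-1:ℝ)^n * (-1:ℝ)^n = 1 := by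
    rw [← pow_add]; exact Even.neg_one_pow ⟨n, rfl⟩
  have hpos : 0 < (-1:ℝ)^n * (cotPoly n).coeff (n+1) := by
    rw [h2, ← mul_assoc, hsq, one_mul]
    exact_mod_cast n.factorial_pos
  linarith

lemma hasDerivAt_cot' {x : ℝ} (h : Real.sin x ≠ 0) :
    HasDerivAt Real.cot (-(1 + Real.cot x ^ 2)) x := by
  have h1 : HasDerivAt (fun y => Real.cos y / Real.sin y)
      ((-Real.sin x * Real.sin x - Real.cos x * Real.cos x) / Real.sin x ^ 2) x :=
    (Real.hasDerivAt_cos x).div (Real.hasDerivAt_sin x) h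
  have hc : Real.cot = fun y => Real.cos y / Real.sin y := funext Real.cot_eq_cos_div_sin
  rw [hc]
  convert h1 using 1
  simp only
  field_simp
  nlinarith [Real.sin_sq_add_cos_sq x]

lemma iteratedDeriv_cot_formula (n : ℕ) :
    ∀ x ∈ Set.Ioo (0:ℝ) 1,
      iteratedDeriv n (fun z : ℝ => Real.cot (π * z)) x
        = π^n * (cotPoly n).eval (Real.cot (π * x)) := by
  induction n with
  | zero => intro x hx; simp [cotPoly]
  | succ n ih =>
    intro x hx
    rw [iteratedDeriv_succ]
    have hev : iteratedDeriv n (fun z : ℝ => Real.cot (π * z))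
        =ᶠ[nhds x] fun z => π^n * (cotPoly n).eval (Real.cot (π * z)) := by
      filter_upwards [isOpen_Ioo.mem_nhds hx] with y hy using ih y hy
    rw [hev.deriv_eq]
    have hsin : Real.sin (π * x) ≠ 0 := by
      refine ne_of_gt (Real.sin_pos_of_pos_of_lt_pi ?_ ?_)
      · exact mul_pos Real.pi_pos hx.1
      · nlinarith [Real.pi_pos, hx.2]
    have h1 : HasDerivAt (fun z : ℝ => Real.cot (π * z))
        (-(1 + Real.cot (π * x) ^ 2) * π) x := by
      have := (hasDerivAt_cot' hsin).comp x ((hasDerivAt_id x).const_mul π)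
      simpa [Function.comp_def] using this
    have h2 : HasDerivAt (fun z : ℝ => π^n * (cotPoly n).eval (Real.cot (π * z)))
        (π^n * ((cotPoly n).derivative.eval (Real.cot (π * x)) *
          (-(1 + Real.cot (π * x) ^ 2) * π))) x :=
      ((((cotPoly n).hasDerivAt (Real.cot (π * x))).comp x h1)).const_mul _
    rw [h2.deriv]
    show _ = π^(n+1) * (cotPoly (n+1)).eval _
    simp only [cotPoly, eval_neg, eval_add, eval_mul, eval_pow, eval_X]
    ring

theorem iteratedDeriv_cot_quarter_neg (s : ℕ) (hs : 1 ≤ s) :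
    iteratedDeriv (2 * s - 1) (fun z : ℝ => Real.cot (π * z)) (1/4) < 0 := by
  have h14 : (1/4:ℝ) ∈ Set.Ioo (0:ℝ) 1 := by norm_num
  rw [iteratedDeriv_cot_formula (2*s-1) _ h14]
  have hc : Real.cot (π * (1/4)) = 1 := by
    rw [show π * (1/4:ℝ) = π/4 by ring, Real.cot_eq_cos_div_sin,
      Real.cos_pi_div_four, Real.sin_pi_div_four]
    have h2 : (0:ℝ) < Real.sqrt 2 / 2 := by positivity
    exact div_self (ne_of_gt h2)
  rw [hc]
  have hodd : (-1:ℝ)^(2*s-1) = -1 := by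
    have h : 2*s-1 = 2*(s-1)+1 := by omega
    rw [h, pow_succ, pow_mul]
    norm_num
  have hev := cotPoly_eval_pos (2*s-1)
  rw [hodd] at hev
  have hπ : 0 < π^(2*s-1) := pow_pos Real.pi_pos _
  nlinarith
end
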